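/- Lanczos restart recovery: Let A be an n×n Hermitian complex matrix, let m ≥ k ≥ 1, set N = m+1+k, and let (V_N, T_N, β_N, v_{N+1}) be a Lanczos relation of length N for A with starting vector v_1; denote by v_1, …, v_{N+1} the Lanczos vectors. Let T^{(m+1,k)} be the (2k+1)×(2k+1) principal submatrix of T_N consisting of rows and columns m+1−k through m+1+k. Suppose (Ṽ_k, T̃_k, β̃_k, w̃) is a Lanczos relation of length k for the Hermitian matrix T^{(m+1,k)} with starting vector e_{k+1} ∈ ℝ^{2k+1}, and suppose (W_k, T_k^r, β_k^r, w) is a Lanczos relation of length k for A with starting vector v_{m+1}. Then T_k^r = T̃_k and β_k^r = β̃_k; i.e., the tridiagonal matrix of the restarted Lanczos process for A started at v_{m+1} coincides with the tridiagonal matrix obtained by running the Lanczos process on the window matrix T^{(m+1,k)} started at e_{k+1}. -/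

import Mathlib

open Matrix

/-- A Lanczos relation of length `k` for an `n × n` Hermitian matrix `A` over `𝕜`
with starting unit vector `v`: orthonormal columns `V` with first column `v`, a real
symmetric tridiagonal matrix `T` with positive subdiagonal, `β > 0` and a unit vector
`vNext` orthogonal to the columns of `V`, such that `A V = V T + β vNext eₖ*`. -/
structure LanczosRelation (𝕜 : Type) [RCLike 𝕜] (n k : ℕ)
    (A : Matrix (Fin n) (Fin n) 𝕜) (v : Fin n → 𝕜) where
  kpos : 0 < k
  V : Matrix (Fin n) (Fin k) 𝕜
  T : Matrix (Fin k) (Fin k) ℝ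
  β : ℝ
  vNext : Fin n → 𝕜
  orthonormal : Vᴴ * V = 1
  firstCol : (fun i => V i ⟨0, kpos⟩) = v
  symm : T.IsHermitian
  tridiag : ∀ i j : Fin k, (i : ℕ) + 1 < (j : ℕ) → T i j = 0
  subdiag_pos : ∀ (i : ℕ) (h : i + 1 < k), 0 < T ⟨i + 1, h⟩ ⟨i, by omega⟩
  β_pos : 0 < β
  vNext_unit : star vNext ⬝ᵥ vNext = 1
  vNext_orth : Vᴴ *ᵥ vNext = 0
  relation : A * V = V * T.map (algebraMap ℝ 𝕜) +
      (algebraMap ℝ 𝕜 β) • vecMulVec vNext (Pi.single ⟨k - 1, by omega⟩ 1)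

namespace LanczosRelation
variable {𝕜 : Type} [RCLike 𝕜] {n k : ℕ} {A : Matrix (Fin n) (Fin n) 𝕜} {v : Fin n → 𝕜}
  (L : LanczosRelation 𝕜 n k A v)

/-- column `j` of `V`. -/
def col (j : Fin k) : Fin n → 𝕜 := fun i => L.V i j

lemma tridiag' (i j : Fin k) (h : (j : ℕ) + 1 < (i : ℕ)) : L.T i j = 0 := by
  have hs := L.symm
  rw [Matrix.IsHermitian, ← Matrix.ext_iff] at hs
  have := hs i j
  rw [Matrix.conjTranspose_apply, star_trivial] at this
  rw [← this]; exact L.tridiag j i h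

lemma col_rel (j : Fin k) :
    A *ᵥ L.col j = (∑ l, (algebraMap ℝ 𝕜 (L.T l j)) • L.col l) +
      (if (j : ℕ) = k - 1 then (algebraMap ℝ 𝕜 L.β) • L.vNext else 0) := by
  funext i
  have hr := L.relation
  rw [← Matrix.ext_iff] at hr
  have h := hr i j
  simp only [Matrix.mul_apply, Matrix.add_apply, Matrix.smul_apply, Matrix.map_apply,
    vecMulVec_apply, Pi.single_apply] at h
  simp only [mulVec, dotProduct, col, Finset.sum_apply, Pi.add_apply, Pi.smul_apply,
    smul_eq_mul]
  rw [h]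
  congr 1
  · exact Finset.sum_congr rfl (fun l _ => mul_comm _ _)
  · by_cases hj : (j : ℕ) = k - 1
    · have : j = ⟨k-1, by omega⟩ := Fin.ext hj
      simp [this, mul_comm, mul_assoc]
    · have : j ≠ ⟨k-1, by omega⟩ := fun hh => hj (by simpa using congrArg Fin.val hh)
      simp [hj, this]

lemma dotProduct_finsum {ι : Type*} (s : Finset ι) (x : Fin n → 𝕜) (f : ι → Fin n → 𝕜) :
    x ⬝ᵥ (∑ l ∈ s, f l) = ∑ l ∈ s, x ⬝ᵥ f l := by
  simp only [dotProduct, Finset.sum_apply, Finset.mul_sum]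
  exact Finset.sum_comm

lemma col_orth (i j : Fin k) :
    star (L.col i) ⬝ᵥ L.col j = if i = j then (1 : 𝕜) else 0 := by
  have ho := L.orthonormal
  rw [← Matrix.ext_iff] at ho
  have h := ho i j
  simp only [Matrix.mul_apply, Matrix.conjTranspose_apply, Matrix.one_apply] at h
  simpa [dotProduct, col] using h

lemma col_vNext_orth (i : Fin k) : star (L.col i) ⬝ᵥ L.vNext = 0 := by
  have h := congrFun L.vNext_orth i
  simpa [mulVec, dotProduct, Matrix.conjTranspose_apply, col] using h

lemma entry_eq (i j : Fin k) :
    (algebraMap ℝ 𝕜 (L.T i j)) = star (L.col i) ⬝ᵥ (A *ᵥ L.col j) := by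
  rw [L.col_rel j, dotProduct_add, dotProduct_finsum _ _ _]
  have h1 : ∀ l, star (L.col i) ⬝ᵥ ((algebraMap ℝ 𝕜 (L.T l j)) • L.col l)
      = if i = l then (algebraMap ℝ 𝕜 (L.T l j)) else 0 := by
    intro l
    rw [dotProduct_smul, L.col_orth i l]
    simp [smul_eq_mul]
  simp only [h1]
  rw [Finset.sum_ite_eq (Finset.univ) i]
  by_cases hj : (j : ℕ) = k - 1
  · simp [hj, dotProduct_smul, L.col_vNext_orth i]
  · simp [hj]

lemma succ_col (j : ℕ) (hj : j + 1 < k) :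
    (algebraMap ℝ 𝕜 (L.T ⟨j+1, hj⟩ ⟨j, by omega⟩)) • L.col ⟨j+1, hj⟩
      = A *ᵥ L.col ⟨j, by omega⟩ -
        ∑ l ∈ Finset.Iic (⟨j, by omega⟩ : Fin k),
          (algebraMap ℝ 𝕜 (L.T l ⟨j, by omega⟩)) • L.col l := by
  rw [L.col_rel ⟨j, by omega⟩]
  have hne : ¬ ((⟨j, by omega⟩ : Fin k) : ℕ) = k - 1 := by simp; omega
  rw [if_neg hne, add_zero, eq_sub_iff_add_eq]
  rw [← Finset.sum_sdiff (Finset.subset_univ (Finset.Iic (⟨j, by omega⟩ : Fin k)))]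
  congr 1
  rw [Finset.sum_eq_single (⟨j+1, hj⟩ : Fin k)]
  · intro l hl hlne
    have h1 : ¬ l ≤ (⟨j, by omega⟩ : Fin k) := by
      simpa [Finset.mem_sdiff] using hl
    have h1' : (j : ℕ) < (l : ℕ) := by
      rw [Fin.le_def] at h1; simpa using h1
    have hlne' : (l : ℕ) ≠ j + 1 := fun h => hlne (Fin.ext h)
    have h2 : (j : ℕ) + 1 < (l : ℕ) := by omega
    rw [L.tridiag' l ⟨j, by omega⟩ h2]
    simp
  · intro h
    exfalso
    exact h (by simp [Finset.mem_sdiff, Fin.le_def])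

lemma last_col :
    (algebraMap ℝ 𝕜 L.β) • L.vNext
      = A *ᵥ L.col ⟨k-1, Nat.sub_lt L.kpos Nat.one_pos⟩ -
        ∑ l, (algebraMap ℝ 𝕜 (L.T l ⟨k-1, Nat.sub_lt L.kpos Nat.one_pos⟩)) • L.col l := by
  rw [L.col_rel ⟨k-1, Nat.sub_lt L.kpos Nat.one_pos⟩, if_pos rfl]
  abel

lemma algebraMap_inj : Function.Injective (algebraMap ℝ 𝕜) :=
  (algebraMap ℝ 𝕜).injective

lemma smul_unit_dot (c : ℝ) (x : Fin n → 𝕜) (hx : star x ⬝ᵥ x = 1) :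
    star ((algebraMap ℝ 𝕜 c) • x) ⬝ᵥ ((algebraMap ℝ 𝕜 c) • x) = algebraMap ℝ 𝕜 (c^2) := by
  rw [star_smul, smul_dotProduct, dotProduct_smul, hx]
  have : star (algebraMap ℝ 𝕜 c) = algebraMap ℝ 𝕜 c := by
    simpa using RCLike.conj_ofReal (K := 𝕜) c
  rw [this]
  simp [smul_eq_mul, sq, _root_.map_mul]

lemma unique (L1 L2 : LanczosRelation 𝕜 n k A v) : L1.T = L2.T ∧ L1.β = L2.β := by
  -- columns agree
  have cols : ∀ j : ℕ, ∀ h : j < k, L1.col ⟨j, h⟩ = L2.col ⟨j, h⟩ := by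
    intro j
    induction j using Nat.strong_induction_on with
    | _ j ih =>
      intro h
      match j with
      | 0 => exact L1.firstCol.trans L2.firstCol.symm
      | Nat.succ j =>
        have hj : j + 1 < k := h
        have hjk : j < k := by omega
        -- entries T l ⟨j⟩ agree for l ≤ j
        have hT : ∀ l : Fin k, l ≤ ⟨j, hjk⟩ → L1.T l ⟨j, hjk⟩ = L2.T l ⟨j, hjk⟩ := by
          intro l hl
          have hl' : (l : ℕ) < k := l.2
          have hcl : L1.col l = L2.col l := by
            have := ih l (by rw [Fin.le_def] at hl; simpa using Nat.lt_succ_of_le hl) hl'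
            simpa using this
          apply algebraMap_inj (𝕜 := 𝕜)
          rw [L1.entry_eq, L2.entry_eq, hcl, ih j (by omega) hjk]
        have hr : A *ᵥ L1.col ⟨j, hjk⟩ -
              ∑ l ∈ Finset.Iic (⟨j, hjk⟩ : Fin k),
                (algebraMap ℝ 𝕜 (L1.T l ⟨j, hjk⟩)) • L1.col l
            = A *ᵥ L2.col ⟨j, hjk⟩ -
              ∑ l ∈ Finset.Iic (⟨j, hjk⟩ : Fin k),
                (algebraMap ℝ 𝕜 (L2.T l ⟨j, hjk⟩)) • L2.col l := by
          rw [ih j (by omega) hjk]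
          congr 1
          apply Finset.sum_congr rfl
          intro l hl
          have hl' := Finset.mem_Iic.mp hl
          rw [hT l hl']
          congr 1
          have := ih l (by rw [Fin.le_def] at hl'; simpa using Nat.lt_succ_of_le hl') l.2
          simpa using this
        have e1 := L1.succ_col j hj
        have e2 := L2.succ_col j hj
        rw [← hr] at e2
        rw [← e1] at e2
        set t1 := L1.T ⟨j+1, hj⟩ ⟨j, by omega⟩ with ht1
        set t2 := L2.T ⟨j+1, hj⟩ ⟨j, by omega⟩ with ht2
        have hp1 : 0 < t1 := L1.subdiag_pos j hj
        have hp2 : 0 < t2 := L2.subdiag_pos j hj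
        have hu1 : star (L1.col ⟨j+1, hj⟩) ⬝ᵥ L1.col ⟨j+1, hj⟩ = 1 := by
          have := L1.col_orth ⟨j+1, hj⟩ ⟨j+1, hj⟩; simpa using this
        have hu2 : star (L2.col ⟨j+1, hj⟩) ⬝ᵥ L2.col ⟨j+1, hj⟩ = 1 := by
          have := L2.col_orth ⟨j+1, hj⟩ ⟨j+1, hj⟩; simpa using this
        have hsq : algebraMap ℝ 𝕜 (t2^2) = algebraMap ℝ 𝕜 (t1^2) := by
          rw [← smul_unit_dot t2 _ hu2, ← smul_unit_dot t1 _ hu1, e2]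
        have ht : t1 = t2 := by
          have := algebraMap_inj (𝕜 := 𝕜) hsq
          nlinarith
        rw [← ht] at e2
        have hc : (algebraMap ℝ 𝕜 t1) ≠ 0 := by
          intro hh
          have : t1 = 0 := algebraMap_inj (𝕜 := 𝕜) (by simpa using hh)
          exact hp1.ne' this
        exact (smul_right_injective _ hc e2).symm
  have colsF : ∀ j : Fin k, L1.col j = L2.col j := fun j => by
    have := cols j.1 j.2; simpa using this
  have hT : L1.T = L2.T := by
    ext i j
    apply algebraMap_inj (𝕜 := 𝕜)
    rw [L1.entry_eq, L2.entry_eq, colsF i, colsF j]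
  refine ⟨hT, ?_⟩
  have e1 := L1.last_col
  have e2 := L2.last_col
  rw [← hT] at e2
  have hcols : (∑ l, (algebraMap ℝ 𝕜 (L1.T l ⟨k-1, Nat.sub_lt L1.kpos Nat.one_pos⟩)) • L2.col l)
      = ∑ l, (algebraMap ℝ 𝕜 (L1.T l ⟨k-1, Nat.sub_lt L1.kpos Nat.one_pos⟩)) • L1.col l := by
    apply Finset.sum_congr rfl; intro l _; rw [colsF l]
  rw [colsF ⟨k-1, Nat.sub_lt L1.kpos Nat.one_pos⟩] at e1
  have e2' : (algebraMap ℝ 𝕜 L2.β) • L2.vNext = (algebraMap ℝ 𝕜 L1.β) • L1.vNext := by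
    rw [e2, e1]
    congr 1
  have hsq : algebraMap ℝ 𝕜 (L2.β^2) = algebraMap ℝ 𝕜 (L1.β^2) := by
    rw [← smul_unit_dot L2.β _ L2.vNext_unit, ← smul_unit_dot L1.β _ L1.vNext_unit, e2']
  have := algebraMap_inj (𝕜 := 𝕜) hsq
  nlinarith [L1.β_pos, L2.β_pos]

lemma window_support {k : ℕ} {W : Matrix (Fin (2*k+1)) (Fin (2*k+1)) ℝ}
    (hband : ∀ i l : Fin (2*k+1), (i:ℕ) + 1 < (l:ℕ) ∨ (l:ℕ) + 1 < (i:ℕ) → W i l = 0)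
    {st : Fin (2*k+1) → ℝ} (hst : st = Pi.single (⟨k, by omega⟩ : Fin (2*k+1)) 1)
    (Lw : LanczosRelation ℝ (2*k+1) k W st) :
    ∀ j : ℕ, ∀ hj : j < k, ∀ i : Fin (2*k+1),
      ((i:ℕ) + j < k ∨ k + j < (i:ℕ)) → Lw.V i ⟨j, hj⟩ = 0 := by
  intro j
  induction j using Nat.strong_induction_on with
  | _ j ih =>
    intro hj i hi
    match j with
    | 0 =>
      have h0 : Lw.V i ⟨0, hj⟩ = st i := congrFun Lw.firstCol i
      have hik : i ≠ (⟨k, by omega⟩ : Fin (2*k+1)) := by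
        intro hh
        have := congrArg Fin.val hh
        simp at this
        omega
      rw [h0, hst, Pi.single_apply, if_neg hik]
    | Nat.succ j =>
      have hj' : j + 1 < k := hj
      have hjk : j < k := by omega
      have e := congrFun (Lw.succ_col j hj') i
      simp only [Pi.smul_apply, Pi.sub_apply, Finset.sum_apply, smul_eq_mul,
        Algebra.algebraMap_self, RingHom.id_apply] at e
      have h1 : (W *ᵥ Lw.col ⟨j, hjk⟩) i = 0 := by
        rw [mulVec, dotProduct]
        apply Finset.sum_eq_zero
        intro l _
        rcases Nat.lt_or_ge ((l:ℕ) + j) k with hl | hl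
        · rw [show Lw.col ⟨j, hjk⟩ l = 0 from ih j (by omega) hjk l (Or.inl hl)]; ring
        · rcases Nat.lt_or_ge (k + j) (l:ℕ) with hl2 | hl2
          · rw [show Lw.col ⟨j, hjk⟩ l = 0 from ih j (by omega) hjk l (Or.inr hl2)]; ring
          · rw [hband i l (by omega)]; ring
      have h2 : ∀ l ∈ Finset.Iic (⟨j, hjk⟩ : Fin k),
          (Lw.T l ⟨j, hjk⟩) * Lw.col l i = 0 := by
        intro l hl
        have hl' : (l:ℕ) ≤ j := by
          have := Finset.mem_Iic.mp hl; rw [Fin.le_def] at this; simpa using this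
        have : Lw.col l i = 0 := by
          have := ih l.1 (by omega) l.2 i (by omega)
          simpa [col, Fin.eta] using this
        rw [this]; ring
      have e' : Lw.T ⟨j+1, hj'⟩ ⟨j, by omega⟩ * Lw.col ⟨j+1, hj'⟩ i = 0 := by
        rw [e]
        rw [h1, Finset.sum_eq_zero h2]
        ring
      have hpos := Lw.subdiag_pos j hj'
      have := mul_eq_zero.mp e'
      rcases this with h | h
      · exact absurd h hpos.ne'
      · exact h

lemma mul_vecMulVec {n p q : ℕ} (U : Matrix (Fin n) (Fin p) ℂ) (x : Fin p → ℂ)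
    (y : Fin q → ℂ) : U * vecMulVec x y = vecMulVec (U *ᵥ x) y := by
  ext i j
  simp [Matrix.mul_apply, vecMulVec_apply, mulVec, dotProduct, Finset.sum_mul, mul_assoc]

end LanczosRelation

/-- **Lanczos restart recovery**: the tridiagonal matrix (and next `β`) produced by `k`
steps of the Lanczos process for `A` restarted at the Lanczos vector `v_{m+1}` of a primary
Lanczos process of length `N = m+1+k` coincides with the one produced by `k` steps of the
Lanczos process for the `(2k+1) × (2k+1)` window `T^{(m+1,k)}` of the primary tridiagonal
matrix, started at the middle unit vector `e_{k+1}`. -/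
theorem lanczos_restart_recovery
    {n m k : ℕ} (hk : 1 ≤ k) (hmk : k ≤ m)
    {A : Matrix (Fin n) (Fin n) ℂ} (hA : A.IsHermitian)
    {v₁ : Fin n → ℂ} (L : LanczosRelation ℂ n (m + 1 + k) A v₁)
    (W : Matrix (Fin (2 * k + 1)) (Fin (2 * k + 1)) ℝ)
    (hW : W = L.T.submatrix
        (fun i : Fin (2 * k + 1) => (⟨m - k + i, by omega⟩ : Fin (m + 1 + k)))
        (fun i : Fin (2 * k + 1) => (⟨m - k + i, by omega⟩ : Fin (m + 1 + k))))
    (Lwin : LanczosRelation ℝ (2 * k + 1) k W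
        (Pi.single (⟨k, by omega⟩ : Fin (2 * k + 1)) 1))
    (Lres : LanczosRelation ℂ n k A (fun i => L.V i ⟨m, by omega⟩)) :
    Lres.T = Lwin.T ∧ Lres.β = Lwin.β := by
  classical
  set c : ℝ →+* ℂ := algebraMap ℝ ℂ with hc
  set f : Fin (2*k+1) → Fin (m+1+k) := fun l => ⟨m - k + l, by omega⟩ with hf
  have hf_inj : Function.Injective f := by
    intro a b hab
    have := congrArg Fin.val hab
    simp only [hf] at this
    exact Fin.ext (by omega)
  set U : Matrix (Fin n) (Fin (2*k+1)) ℂ := L.V.submatrix id f with hU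
  -- U has orthonormal columns
  have hUU : Uᴴ * U = 1 := by
    ext a b
    have ho := L.orthonormal
    rw [← Matrix.ext_iff] at ho
    have h := ho (f a) (f b)
    simp only [Matrix.mul_apply, conjTranspose_apply] at h ⊢
    simp only [hU, submatrix_apply, id_eq]
    rw [h]
    simp [Matrix.one_apply, hf_inj.eq_iff]
  -- band structure of W
  have hband : ∀ i l : Fin (2*k+1), (i:ℕ) + 1 < (l:ℕ) ∨ (l:ℕ) + 1 < (i:ℕ) → W i l = 0 := by
    intro i l h
    rw [hW, submatrix_apply]
    rcases h with h | h
    · exact L.tridiag _ _ (by show m - k + (i:ℕ) + 1 < m - k + (l:ℕ); omega)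
    · exact L.tridiag' _ _ (by show m - k + (l:ℕ) + 1 < m - k + (i:ℕ); omega)
  -- support of window Lanczos vectors
  have hVsupp : ∀ (j : Fin k) (l : Fin (2*k+1)), (l:ℕ) = 0 ∨ (l:ℕ) = 2*k →
      Lwin.V l j = 0 := by
    intro j l hl
    have := LanczosRelation.window_support hband rfl Lwin j.1 j.2 l (by rcases hl with h | h <;> [left; right] <;> omega)
    simpa [Fin.eta] using this
  -- the key local relation: A*U agrees with U*(W.map c) on interior columns
  have hE : ∀ (i : Fin n) (l : Fin (2*k+1)), 0 < (l:ℕ) → (l:ℕ) < 2*k →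
      (A * U) i l = (U * W.map c) i l := by
    intro i l hl0 hl2
    have hrel := L.relation
    rw [← Matrix.ext_iff] at hrel
    have h := hrel i (f l)
    have hfl : (f l : ℕ) ≠ m + 1 + k - 1 := by simp [hf]; omega
    have hAV : (A * U) i l = ∑ q, L.V i q * c (L.T q (f l)) := by
      have h1 : (A * U) i l = (A * L.V) i (f l) := by
        simp [Matrix.mul_apply, hU, submatrix_apply]
      rw [h1, h]
      simp only [Matrix.add_apply, Matrix.mul_apply, Matrix.map_apply, Matrix.smul_apply,
        vecMulVec_apply, Pi.single_apply, smul_eq_mul]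
      rw [if_neg (fun hh => hfl (congrArg Fin.val hh))]
      ring
    rw [hAV]
    have hUW : (U * W.map c) i l = ∑ l', L.V i (f l') * c (L.T (f l') (f l)) := by
      simp only [Matrix.mul_apply, hU, submatrix_apply, id_eq, Matrix.map_apply, hW]
    rw [hUW]
    -- reindex: terms outside the window vanish
    have himg : ∑ q ∈ Finset.univ.image f, (L.V i q * c (L.T q (f l)))
        = ∑ l', L.V i (f l') * c (L.T (f l') (f l)) :=
      Finset.sum_image (fun a _ b _ hab => hf_inj hab)
    rw [← himg]
    refine (Finset.sum_subset (Finset.subset_univ _) ?_).symm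
    intro q _ hq
    have hq' : (q : ℕ) < m - k ∨ m + k < (q : ℕ) := by
      by_contra hcon
      push_neg at hcon
      exact hq (Finset.mem_image.mpr ⟨⟨q.1 - (m-k), by omega⟩, Finset.mem_univ _,
        Fin.ext (by simp [hf]; omega)⟩)
    have hTq : L.T q (f l) = 0 := by
      rcases hq' with h' | h'
      · exact L.tridiag _ _ (by simp [hf]; omega)
      · exact L.tridiag' _ _ (by simp [hf]; omega)
    rw [hTq]
    simp
  have hstarc : Function.Semiconj (⇑c) star star := fun x => by
    simp [hc, RCLike.star_def, Complex.conj_ofReal]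
  set Vt : Matrix (Fin (2*k+1)) (Fin k) ℂ := Lwin.V.map c with hVt
  set wt : Fin (2*k+1) → ℂ := fun l => c (Lwin.vNext l) with hwt
  have hVt1 : Vtᴴ * Vt = 1 := by
    rw [hVt, ← Matrix.conjTranspose_map c hstarc, ← Matrix.map_mul, Lwin.orthonormal,
      Matrix.map_one c (map_zero c) (map_one c)]
  have horth : (U * Vt)ᴴ * (U * Vt) = 1 := by
    rw [conjTranspose_mul, Matrix.mul_assoc, ← Matrix.mul_assoc Uᴴ U Vt, hUU,
      Matrix.one_mul, hVt1]
  have hfirst : (fun i => (U * Vt) i ⟨0, Lwin.kpos⟩) = fun i => L.V i ⟨m, by omega⟩ := by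
    funext i
    have hcol0 := congrFun Lwin.firstCol
    simp only [Matrix.mul_apply, hVt, Matrix.map_apply]
    rw [Finset.sum_eq_single (⟨k, by omega⟩ : Fin (2*k+1))]
    · rw [hcol0]
      simp only [Pi.single_apply, if_pos rfl, if_true, _root_.map_one, mul_one, hU,
        submatrix_apply, id_eq]
      exact congrArg (L.V i) (Fin.ext (by simp [hf]; omega))
    · intro b _ hb
      rw [hcol0, Pi.single_apply, if_neg hb, map_zero, mul_zero]
    · intro hh
      exact absurd (Finset.mem_univ _) hh
  have hEV : A * U * Vt = U * W.map c * Vt := by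
    ext i j
    rw [Matrix.mul_apply, Matrix.mul_apply]
    apply Finset.sum_congr rfl
    intro l _
    by_cases hl : 0 < (l:ℕ) ∧ (l:ℕ) < 2*k
    · rw [hE i l hl.1 hl.2]
    · have hl' : (l:ℕ) = 0 ∨ (l:ℕ) = 2*k := by omega
      have : Lwin.V l j = 0 := hVsupp j l hl'
      simp [hVt, Matrix.map_apply, this]
  have hWV : W.map c * Vt = Vt * Lwin.T.map c +
      (c Lwin.β) • vecMulVec wt (Pi.single (⟨k-1, by omega⟩ : Fin k) 1) := by
    have hr := Lwin.relation
    rw [← Matrix.ext_iff] at hr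
    ext i j
    have h := hr i j
    have lhs : (W.map c * Vt) i j = c ((W * Lwin.V) i j) := by
      simp [Matrix.mul_apply, map_sum, _root_.map_mul, hVt]
    rw [lhs, h]
    simp only [Matrix.add_apply, Matrix.mul_apply, Matrix.smul_apply, Matrix.map_apply,
      vecMulVec_apply, Pi.single_apply, smul_eq_mul, map_add, map_sum, _root_.map_mul,
      Algebra.algebraMap_self, RingHom.id_apply, hVt, hwt, apply_ite c, _root_.map_one,
      map_zero]
  have hrel : A * (U * Vt) = (U * Vt) * Lwin.T.map c +
      (c Lwin.β) • vecMulVec (U *ᵥ wt) (Pi.single (⟨k-1, by omega⟩ : Fin k) 1) := by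
    rw [← Matrix.mul_assoc, hEV, Matrix.mul_assoc, hWV, Matrix.mul_add,
      ← Matrix.mul_assoc, Matrix.mul_smul, LanczosRelation.mul_vecMulVec]
  have hstarwt : star wt = wt := funext fun l => by
    simp only [hwt, Pi.star_apply]
    rw [← hstarc]
    simp
  have hunit : star (U *ᵥ wt) ⬝ᵥ (U *ᵥ wt) = 1 := by
    rw [star_mulVec, dotProduct_mulVec, vecMul_vecMul, hUU, vecMul_one, hstarwt]
    have := Lwin.vNext_unit
    simp only [dotProduct, Pi.star_apply, star_trivial] at this
    simp only [hwt, dotProduct, ← _root_.map_mul, ← map_sum]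
    rw [this, _root_.map_one]
  have hworth : (U * Vt)ᴴ *ᵥ (U *ᵥ wt) = 0 := by
    have hstep : (U * Vt)ᴴ *ᵥ (U *ᵥ wt) = Vtᴴ *ᵥ ((Uᴴ * U) *ᵥ wt) := by
      rw [conjTranspose_mul, mulVec_mulVec, mulVec_mulVec, Matrix.mul_assoc]
    rw [hstep, hUU, Matrix.one_mulVec]
    have ho := Lwin.vNext_orth
    funext j
    have h := congrFun ho j
    simp only [mulVec, dotProduct, Matrix.conjTranspose_apply, Pi.zero_apply] at h ⊢
    simp only [hVt, hwt, Matrix.map_apply]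
    have : ∀ l, star (c (Lwin.V l j)) * c (Lwin.vNext l)
        = c (Lwin.V l j * Lwin.vNext l) := by
      intro l
      rw [← hstarc]
      simp [_root_.map_mul]
    simp only [this, ← map_sum]
    have h' : ∑ l, Lwin.V l j * Lwin.vNext l = 0 := by
      simpa using h
    rw [h', map_zero]
  let Lc : LanczosRelation ℂ n k A (fun i => L.V i ⟨m, by omega⟩) :=
    { kpos := Lwin.kpos
      V := U * Vt
      T := Lwin.T
      β := Lwin.β
      vNext := U *ᵥ wt
      orthonormal := horth
      firstCol := hfirst
      symm := Lwin.symm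
      tridiag := Lwin.tridiag
      subdiag_pos := Lwin.subdiag_pos
      β_pos := Lwin.β_pos
      vNext_unit := hunit
      vNext_orth := hworth
      relation := hrel }
  exact Lres.unique Lc
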